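/- For every infinite cardinal σ there exists a function h' : [σ⁺]² → σ such that for every subset X of σ⁺ of cardinality σ⁺, the image of [X]² under h' is cofinal in σ (i.e., for every j < σ there exists j₁ with j < j₁ < σ and i₀, i₁ ∈ X distinct with h'({i₀,i₁}) = j₁). -/

import Mathlib

open Cardinal

/-- Helper instance: the canonical order on `o.ToType` is a well-order.
(Instance search gets stuck on this without a hint.) -/
instance instIsWellOrderToTypeLT (o : Ordinal.{0}) : IsWellOrder o.ToType (· < ·) :=
  isWellOrder_lt

/-- For every infinite cardinal σ there is h' : [σ⁺]² → σ whose image on the pairs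
from any subset of σ⁺ of full cardinality σ⁺ is cofinal in σ. -/
theorem exists_cofinal_pair_coloring (σ : Cardinal.{0}) (hσ : ℵ₀ ≤ σ) :
    ∃ h' : (Order.succ σ).ord.ToType → (Order.succ σ).ord.ToType → Ordinal,
      (∀ i j, h' i j = h' j i) ∧
      (∀ i j, h' i j < σ.ord) ∧
      ∀ X : Set (Order.succ σ).ord.ToType, #X = Order.succ σ →
        ∀ j < σ.ord, ∃ j₁, j < j₁ ∧ j₁ < σ.ord ∧
          ∃ i₀ ∈ X, ∃ i₁ ∈ X, i₀ ≠ i₁ ∧ h' i₀ i₁ = j₁ := by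
  have hσ0 : (0 : Ordinal) < σ.ord := by
    rw [Cardinal.lt_ord, Ordinal.card_zero]
    exact aleph0_pos.trans_le hσ
  -- every proper initial segment has cardinality ≤ σ
  have hcard : ∀ β : (Order.succ σ).ord.ToType, #(Set.Iio β) ≤ σ := by
    intro β
    have h1 : #(Set.Iio β) =
        (Ordinal.typein (α := (Order.succ σ).ord.ToType) (· < ·) β).card :=
      (Ordinal.card_typein
        (r := ((· < ·) : (Order.succ σ).ord.ToType → (Order.succ σ).ord.ToType → Prop)) β).symm
    rw [h1, ← Order.lt_succ_iff, ← Cardinal.lt_ord]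
    exact Ordinal.typein_lt_self β
  -- for every β, choose an injection of Iio β into ordinals < σ.ord
  have key : ∀ β : (Order.succ σ).ord.ToType,
      ∃ f : (Order.succ σ).ord.ToType → Ordinal, (∀ x, f x < σ.ord) ∧
      (∀ x y, x < β → y < β → f x = f y → x = y) := by
    intro β
    have h2 : #(Set.Iio β) ≤ #(σ.ord.ToType) := by
      rw [Cardinal.mk_toType, Cardinal.card_ord]; exact hcard β
    obtain ⟨e⟩ := Cardinal.le_def _ _ |>.1 h2
    refine ⟨fun x => if h : x < β then
        Ordinal.typein (α := σ.ord.ToType) (· < ·) (e ⟨x, h⟩) else 0, ?_, ?_⟩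
    · intro x
      by_cases h : x < β
      · simpa only [dif_pos h] using Ordinal.typein_lt_self (e ⟨x, h⟩)
      · simpa only [dif_neg h] using hσ0
    · intro x y hx hy hxy
      dsimp only at hxy
      rw [dif_pos hx, dif_pos hy] at hxy
      have := e.injective (Ordinal.typein_injective _ hxy)
      exact congrArg Subtype.val this
  choose F hFlt hFinj using key
  refine ⟨fun i j => if i < j then F j i else F i j, ?_, ?_, ?_⟩
  · intro i j
    dsimp only
    rcases lt_trichotomy i j with h | h | h
    · rw [if_pos h, if_neg (asymm h)]
    · subst h; rfl
    · rw [if_neg (asymm h), if_pos h]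
  · intro i j
    dsimp only
    by_cases h : i < j
    · rw [if_pos h]; exact hFlt j i
    · rw [if_neg h]; exact hFlt i j
  · intro X hX j hj
    -- an injection of σ.ord.ToType into X
    have hle : #(σ.ord.ToType) ≤ #X := by
      rw [Cardinal.mk_toType, Cardinal.card_ord, hX]
      exact (Order.le_succ σ)
    obtain ⟨e0⟩ := Cardinal.le_def _ _ |>.1 hle
    set g : σ.ord.ToType → (Order.succ σ).ord.ToType := fun a => (e0 a : _) with hg
    have hginj : Function.Injective g := fun a b h => e0.injective (Subtype.ext h)
    -- the range of g is bounded
    have hSb : Set.Bounded (· < ·) (Set.range g) := by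
      refine not_isCofinal_iff.1 fun hc => ?_
      have h5 := Order.cof_le hc
      rw [Ordinal.cof_toType, Cardinal.mk_range_eq _ hginj, Cardinal.mk_toType,
        Cardinal.card_ord, (Cardinal.isRegular_succ hσ).cof_eq] at h5
      exact (Order.lt_succ σ).not_ge h5
    obtain ⟨b, hb⟩ := hSb
    -- find β ∈ X with b ≤ β
    have hβ : ∃ β ∈ X, b ≤ β := by
      by_contra h
      push_neg at h
      have hsub : X ⊆ Set.Iio b := fun x hx => h x hx
      have := (Cardinal.mk_le_mk_of_subset hsub).trans (hcard b)
      rw [hX] at this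
      exact absurd this (Order.lt_succ σ).not_ge
    obtain ⟨β, hβX, hbβ⟩ := hβ
    have hgβ : ∀ a, g a < β := fun a => lt_of_lt_of_le (hb _ (Set.mem_range_self a)) hbβ
    have hjj1 : j < j + 1 := lt_of_lt_of_le (Order.lt_succ j) (Ordinal.add_one_eq_succ j).ge
    -- the values F β (g a) are σ-many distinct ordinals < σ.ord, hence unbounded
    have hex : ∃ a, j < F β (g a) := by
      by_contra h
      push_neg at h
      have hj1 : j + 1 < σ.ord := by
        rw [Ordinal.add_one_eq_succ]
        exact (Cardinal.isSuccLimit_ord hσ).succ_lt hj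
      have hinj2 : Function.Injective
          (fun a : ULift.{1} σ.ord.ToType => (⟨F β (g a.down), (h a.down).trans_lt hjj1⟩ :
            Set.Iio (j + 1))) := by
        intro a b hab
        have := hFinj β _ _ (hgβ a.down) (hgβ b.down) (congrArg Subtype.val hab)
        exact congrArg ULift.up (hginj this)
      have h3 := Cardinal.mk_le_of_injective hinj2
      rw [Cardinal.mk_uLift, Ordinal.mk_Iio_ordinal, Cardinal.mk_toType, Cardinal.card_ord,
        Cardinal.lift_le] at h3
      have h4 : (j + 1).card < σ := Cardinal.lt_ord.1 hj1
      exact absurd (h3.trans_lt h4) (lt_irrefl σ)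
    obtain ⟨a, ha⟩ := hex
    refine ⟨F β (g a), ha, hFlt β (g a), g a, (e0 a).2, β, hβX, (hgβ a).ne, ?_⟩
    dsimp only
    rw [if_pos (hgβ a)]
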